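/- Let d > 1, p ∈ (1,∞), s ∈ (0,1), δ > 0. Let B, U ⊆ ℝ^d be open sets with U ∩ B_δ ≠ ∅ and U \ B ≠ ∅, where B_δ = {x ∈ B : dist(x, ∂B) > δ}. Let u be a vector field on U ∩ B with ‖u‖_{W^{s,p}(U∩B)} < ∞ whose support is contained in the closure of U ∩ B_δ, and define ũ = u on U ∩ B and ũ = 0 on U \ B. Then there is a constant c, depending only on d, p, s, δ, such that ‖ũ‖_{W^{s,p}(U)} ≤ c ‖u‖_{W^{s,p}(U∩B)}. -/

import Mathlib

open MeasureTheory ENNReal NNReal RealInnerProductSpace Filter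

noncomputable section

abbrev Euc (d : ℕ) : Type := EuclideanSpace ℝ (Fin d)

/-- `∫_D ‖u‖^p` as an extended nonnegative real. -/
def lpIntP (d : ℕ) (p : ℝ) (D : Set (Euc d)) (u : Euc d → Euc d) : ℝ≥0∞ :=
  ∫⁻ x in D, (‖u x‖₊ : ℝ≥0∞) ^ p

/-- The `p`-th power of the fractional Sobolev (Gagliardo) seminorm `|u|_{W^{s,p}(D)}`. -/
def wSemiP (d : ℕ) (s p : ℝ) (D : Set (Euc d)) (u : Euc d → Euc d) : ℝ≥0∞ :=
  ∫⁻ x in D, ∫⁻ y in D,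
    (‖u x - u y‖₊ : ℝ≥0∞) ^ p / (‖x - y‖₊ : ℝ≥0∞) ^ ((d : ℝ) + s * p)

/-- The `p`-th power of the projected seminorm `|u|_{X^{s,p}(D)}`. -/
def xSemiP (d : ℕ) (s p : ℝ) (D : Set (Euc d)) (u : Euc d → Euc d) : ℝ≥0∞ :=
  ∫⁻ x in D, ∫⁻ y in D,
    ENNReal.ofReal (|(inner ℝ (u x - u y) (x - y) : ℝ)| / ‖x - y‖) ^ p
      / (‖x - y‖₊ : ℝ≥0∞) ^ ((d : ℝ) + s * p)

/-- The norm `‖u‖_{W^{s,p}(D)}`. -/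
def wNorm (d : ℕ) (s p : ℝ) (D : Set (Euc d)) (u : Euc d → Euc d) : ℝ≥0∞ :=
  (lpIntP d p D u + wSemiP d s p D u) ^ (1 / p)

/-- The norm `‖u‖_{X^{s,p}(D)}`. -/
def xNorm (d : ℕ) (s p : ℝ) (D : Set (Euc d)) (u : Euc d → Euc d) : ℝ≥0∞ :=
  (lpIntP d p D u + xSemiP d s p D u) ^ (1 / p)

/-- The class `(C^1_c(D))^d` of continuously differentiable vector fields compactly
supported in `D` (viewed as functions on all of `ℝ^d`, extended by zero). -/
def C1c (d : ℕ) (D : Set (Euc d)) : Set (Euc d → Euc d) :=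
  {u | ContDiff ℝ 1 u ∧ HasCompactSupport u ∧ tsupport u ⊆ D}

/-- `W_0^{s,p}(D)`: the closure of `(C^1_c(D))^d` in the norm `‖·‖_{W^{s,p}(D)}`. -/
def W0 (d : ℕ) (s p : ℝ) (D : Set (Euc d)) : Set (Euc d → Euc d) :=
  {u | Measurable u ∧ wNorm d s p D u ≠ ⊤ ∧
    ∃ v : ℕ → Euc d → Euc d, (∀ n, v n ∈ C1c d D) ∧
      Tendsto (fun n => wNorm d s p D (v n - u)) atTop (nhds 0)}

/-- `X_0^{s,p}(D)`: the closure of `(C^1_c(D))^d` in the norm `‖·‖_{X^{s,p}(D)}`. -/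
def X0 (d : ℕ) (s p : ℝ) (D : Set (Euc d)) : Set (Euc d → Euc d) :=
  {u | Measurable u ∧ xNorm d s p D u ≠ ⊤ ∧
    ∃ v : ℕ → Euc d → Euc d, (∀ n, v n ∈ C1c d D) ∧
      Tendsto (fun n => xNorm d s p D (v n - u)) atTop (nhds 0)}

/-- The first `d-1` coordinates `x'` of a point `x ∈ ℝ^d`. -/
def proj' (d : ℕ) (x : Euc d) : Euc (d - 1) :=
  WithLp.toLp 2 (fun i => x (Fin.castLE (Nat.sub_le d 1) i))

/-- The epigraph `{(x', x_d) : x_d > f(x')}` of `f : ℝ^{d-1} → ℝ`. -/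
def epigraph (d : ℕ) (hd : 0 < d) (f : Euc (d - 1) → ℝ) : Set (Euc d) :=
  {x | f (proj' d x) < x ⟨d - 1, Nat.sub_lt hd Nat.one_pos⟩}

/-- The upper half-space `ℝ^d_+`. -/
def halfSpace (d : ℕ) (hd : 0 < d) : Set (Euc d) :=
  {x | 0 < x ⟨d - 1, Nat.sub_lt hd Nat.one_pos⟩}

/-- `D` is a Lipschitz open set with constant `L`. -/
def IsLipschitzSet (d : ℕ) (hd : 0 < d) (L : ℝ) (D : Set (Euc d)) : Prop :=
  ∃ (n : ℕ) (z : Fin n → Euc d) (r : Fin n → ℝ)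
    (f : Fin n → Euc (d - 1) → ℝ) (R : Fin n → (Euc d ≃ᵢ Euc d)),
    (∀ i, z i ∈ frontier D) ∧ (∀ i, 0 < r i) ∧
    (∀ i, LipschitzWith (Real.toNNReal L) (f i)) ∧
    frontier D ⊆ ⋃ i, Metric.ball (z i) (r i) ∧
    (∀ i, R i '' (Metric.ball (z i) (r i) ∩ D) ⊆ epigraph d hd (f i)) ∧
    (∀ i, R i '' (Metric.ball (z i) (r i) ∩ frontier D)
        = R i '' Metric.ball (z i) (r i) ∩ frontier (epigraph d hd (f i)))

/-- `D` is a `C^1` open set. -/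
def IsC1Set (d : ℕ) (hd : 0 < d) (D : Set (Euc d)) : Prop :=
  ∃ (n : ℕ) (z : Fin n → Euc d) (r : Fin n → ℝ)
    (f : Fin n → Euc (d - 1) → ℝ) (R : Fin n → (Euc d ≃ᵢ Euc d)),
    (∀ i, z i ∈ frontier D) ∧ (∀ i, 0 < r i) ∧
    (∀ i, ContDiff ℝ 1 (f i)) ∧
    frontier D ⊆ ⋃ i, Metric.ball (z i) (r i) ∧
    (∀ i, R i '' (Metric.ball (z i) (r i) ∩ D) ⊆ epigraph d hd (f i)) ∧
    (∀ i, R i '' (Metric.ball (z i) (r i) ∩ frontier D)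
        = R i '' Metric.ball (z i) (r i) ∩ frontier (epigraph d hd (f i)))

/-- The constant `C(L) = √(1 + L(L+1))`. -/
def CL (L : ℝ) : ℝ := Real.sqrt (1 + L * (L + 1))

/-- The graph-flattening map `T(x', x_d) = (x', x_d - f(x'))`. -/
def flatten (d : ℕ) (f : Euc (d - 1) → ℝ) (x : Euc d) : Euc d :=
  WithLp.toLp 2 (fun i : Fin d => if (i : ℕ) = d - 1 then x i - f (proj' d x) else x i)

/-- The inverse map `T⁻¹(w', w_d) = (w', w_d + f(w'))`. -/
def shiftGraph (d : ℕ) (f : Euc (d - 1) → ℝ) (w : Euc d) : Euc d :=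
  WithLp.toLp 2 (fun i : Fin d => if (i : ℕ) = d - 1 then w i + f (proj' d w) else w i)

/-- The `p`-th power of the fractional Sobolev seminorm of a scalar function. -/
def wSemiPScalar (d : ℕ) (s p : ℝ) (D : Set (Euc d)) (g : Euc d → ℝ) : ℝ≥0∞ :=
  ∫⁻ x in D, ∫⁻ y in D,
    (‖g x - g y‖₊ : ℝ≥0∞) ^ p / (‖x - y‖₊ : ℝ≥0∞) ^ ((d : ℝ) + s * p)

/-- `B_δ = {x ∈ B : dist(x, ∂B) > δ}`. -/
def innerSet (d : ℕ) (δ : ℝ) (B : Set (Euc d)) : Set (Euc d) :=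
  {x ∈ B | δ < Metric.infDist x (frontier B)}


lemma aux_dist_ge {d : ℕ} {δ : ℝ} {B U : Set (Euc d)} (hB : IsOpen B)
    {x y : Euc d} (hx : x ∈ closure (U ∩ innerSet d δ B)) (hy : y ∉ B) :
    δ ≤ dist x y := by
  have hclosed : IsClosed {z : Euc d | δ ≤ dist z y} :=
    isClosed_le continuous_const (continuous_id.dist continuous_const)
  refine closure_minimal ?_ hclosed hx
  rintro z ⟨-, hzB, hzδ⟩
  by_contra h
  rw [Set.mem_setOf_eq, not_le] at h
  rcases Classical.em (y ∈ closure B) with hyc | hyc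
  · have hyf : y ∈ frontier B := ⟨hyc, by rwa [hB.interior_eq]⟩
    have : Metric.infDist z (frontier B) ≤ dist z y := Metric.infDist_le_dist_of_mem hyf
    linarith
  · have hseg : IsPreconnected (segment ℝ z y) := (convex_segment z y).isPreconnected
    have hwex : (segment ℝ z y ∩ frontier B).Nonempty := by
      by_contra hfr
      rw [Set.not_nonempty_iff_eq_empty] at hfr
      obtain ⟨w, hw⟩ := hseg B (closure B)ᶜ hB isClosed_closure.isOpen_compl
        (fun v hv => by
          rcases Classical.em (v ∈ B) with h' | h'
          · exact Or.inl h'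
          · refine Or.inr fun hvc => ?_
            have : v ∈ segment ℝ z y ∩ frontier B :=
              ⟨hv, hvc, by rwa [hB.interior_eq]⟩
            simp [hfr] at this)
        ⟨z, left_mem_segment ℝ z y, hzB⟩ ⟨y, right_mem_segment ℝ z y, hyc⟩
      exact hw.2.2 (subset_closure hw.2.1)
    obtain ⟨w, hwseg, hwf⟩ := hwex
    have hwball : w ∈ Metric.closedBall z (dist z y) :=
      (convex_closedBall z (dist z y)).segment_subset
        (Metric.mem_closedBall_self dist_nonneg)
        (by simp [Metric.mem_closedBall, dist_comm]) hwseg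
    have h1 : Metric.infDist z (frontier B) ≤ dist z w := Metric.infDist_le_dist_of_mem hwf
    rw [Metric.mem_closedBall] at hwball
    rw [dist_comm] at hwball
    linarith

lemma aux_kappa_lt_top (d : ℕ) {r δ : ℝ} (hδ : 0 < δ) (hr : (d : ℝ) < r) :
    ∫⁻ z in {z : Euc d | δ ≤ ‖z‖}, ((‖z‖₊ : ℝ≥0∞) ^ r)⁻¹ < ⊤ := by
  set C : ℝ := (1 + δ⁻¹) ^ r with hC
  have hrpos : 0 < r := lt_of_le_of_lt (Nat.cast_nonneg d) hr
  have hmeas : MeasurableSet {z : Euc d | δ ≤ ‖z‖} :=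
    (isClosed_le continuous_const continuous_norm).measurableSet
  have hbound : ∀ z : Euc d, z ∈ {z : Euc d | δ ≤ ‖z‖} →
      ((‖z‖₊ : ℝ≥0∞) ^ r)⁻¹ ≤ ENNReal.ofReal C * ENNReal.ofReal ((1 + ‖z‖) ^ (-r)) := by
    intro z hz
    have hz' : (0:ℝ) < ‖z‖ := lt_of_lt_of_le hδ hz
    have h1 : ((‖z‖₊ : ℝ≥0∞) ^ r)⁻¹ = ENNReal.ofReal ((‖z‖ ^ r)⁻¹) := by
      rw [← enorm_eq_nnnorm, ← ofReal_norm, ENNReal.ofReal_rpow_of_pos hz',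
        ENNReal.ofReal_inv_of_pos (Real.rpow_pos_of_pos hz' r)]
    rw [h1, ← ENNReal.ofReal_mul (by positivity)]
    apply ENNReal.ofReal_le_ofReal
    rw [Real.rpow_neg (by positivity), ← div_eq_mul_inv, inv_eq_one_div,
      div_le_div_iff₀ (by positivity) (by positivity), one_mul]
    have h2 : (1:ℝ) ≤ δ⁻¹ * ‖z‖ := by
      rw [← inv_mul_cancel₀ hδ.ne']
      exact mul_le_mul_of_nonneg_left hz (inv_nonneg.2 hδ.le)
    have key : (1 + ‖z‖) ≤ (1 + δ⁻¹) * ‖z‖ := by nlinarith [norm_nonneg z]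
    calc (1 + ‖z‖) ^ r ≤ ((1 + δ⁻¹) * ‖z‖) ^ r :=
          Real.rpow_le_rpow (by positivity) key hrpos.le
      _ = C * ‖z‖ ^ r := Real.mul_rpow (by positivity) (norm_nonneg z)
  calc ∫⁻ z in {z : Euc d | δ ≤ ‖z‖}, ((‖z‖₊ : ℝ≥0∞) ^ r)⁻¹
      ≤ ∫⁻ z in {z : Euc d | δ ≤ ‖z‖},
          ENNReal.ofReal C * ENNReal.ofReal ((1 + ‖z‖) ^ (-r)) :=
        setLIntegral_mono' hmeas hbound
    _ ≤ ∫⁻ z : Euc d, ENNReal.ofReal C * ENNReal.ofReal ((1 + ‖z‖) ^ (-r)) :=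
        setLIntegral_le_lintegral _ _
    _ = ENNReal.ofReal C * ∫⁻ z : Euc d, ENNReal.ofReal ((1 + ‖z‖) ^ (-r)) :=
        lintegral_const_mul' _ _ ENNReal.ofReal_ne_top
    _ < ⊤ := ENNReal.mul_lt_top ENNReal.ofReal_lt_top
        (finite_integral_one_add_norm (by rwa [finrank_euclideanSpace_fin]))

lemma aux_translate (d : ℕ) (r δ : ℝ) (x : Euc d) :
    ∫⁻ y in {y : Euc d | δ ≤ dist x y}, ((‖x - y‖₊ : ℝ≥0∞) ^ r)⁻¹
      = ∫⁻ z in {z : Euc d | δ ≤ ‖z‖}, ((‖z‖₊ : ℝ≥0∞) ^ r)⁻¹ := by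
  have hmp : MeasurePreserving (fun z : Euc d => x - z) volume volume :=
    Measure.measurePreserving_sub_left volume x
  have hemb : MeasurableEmbedding (fun z : Euc d => x - z) :=
    (IsometryEquiv.subLeft x).toHomeomorph.measurableEmbedding
  have key := hmp.setLIntegral_comp_preimage_emb hemb
      (fun y => ((‖x - y‖₊ : ℝ≥0∞) ^ r)⁻¹) {y : Euc d | δ ≤ dist x y}
  have hset : (fun z : Euc d => x - z) ⁻¹' {y : Euc d | δ ≤ dist x y}
      = {z : Euc d | δ ≤ ‖z‖} := by
    ext z
    simp [dist_eq_norm, _root_.sub_sub_cancel]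
  rw [hset] at key
  rw [← key]
  refine setLIntegral_congr_fun ((isClosed_le continuous_const continuous_norm).measurableSet)
    (fun z _ => by rw [_root_.sub_sub_cancel])

theorem stmt11 (d : ℕ) (hd : 1 < d) (p s δ : ℝ) (hp : 1 < p) (hs0 : 0 < s) (hs1 : s < 1)
    (hδ : 0 < δ) :
    ∃ c : ℝ, 0 < c ∧ ∀ (B U : Set (Euc d)), IsOpen B → IsOpen U →
      (U ∩ innerSet d δ B).Nonempty → (U \ B).Nonempty →
      ∀ u : Euc d → Euc d, Measurable u →
        wNorm d s p (U ∩ B) u ≠ ⊤ →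
        (∀ x ∈ (U ∩ B) \ closure (U ∩ innerSet d δ B), u x = 0) →
        wNorm d s p U (Set.indicator B u) ≤ ENNReal.ofReal c * wNorm d s p (U ∩ B) u := by
  have hp0 : (0:ℝ) < p := lt_trans one_pos hp
  set r : ℝ := (d : ℝ) + s * p with hr
  have hrd : (d : ℝ) < r := lt_add_of_pos_right _ (mul_pos hs0 hp0)
  set κ : ℝ≥0∞ := ∫⁻ z in {z : Euc d | δ ≤ ‖z‖}, ((‖z‖₊ : ℝ≥0∞) ^ r)⁻¹ with hκ
  have hκtop : κ ≠ ⊤ := (aux_kappa_lt_top d hδ hrd).ne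
  set M : ℝ≥0∞ := (1 + 2 * κ) ^ (1/p) with hM
  have hbase_ne_top : (1 + 2 * κ) ≠ ⊤ :=
    ENNReal.add_ne_top.mpr ⟨ENNReal.one_ne_top, ENNReal.mul_ne_top ENNReal.ofNat_ne_top hκtop⟩
  have hM_ne_top : M ≠ ⊤ :=
    ENNReal.rpow_ne_top_of_nonneg (by positivity) hbase_ne_top
  have hM_one : (1:ℝ≥0∞) ≤ M := by
    calc (1:ℝ≥0∞) = 1 ^ (1/p) := (ENNReal.one_rpow _).symm
      _ ≤ _ := ENNReal.rpow_le_rpow le_self_add (by positivity)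
  refine ⟨M.toReal, ENNReal.toReal_pos (one_pos.trans_le hM_one).ne' hM_ne_top, ?_⟩
  intro B U hB hU _ _ u hu _ hsupp
  rw [ENNReal.ofReal_toReal hM_ne_top]
  set v := Set.indicator B u with hv
  have hv' : Measurable v := hu.indicator hB.measurableSet
  have hUB : MeasurableSet (U ∩ B) := hU.measurableSet.inter hB.measurableSet
  have hUdB : MeasurableSet (U \ B) := hU.measurableSet.diff hB.measurableSet
  have hUsplit : U = (U ∩ B) ∪ (U \ B) := (Set.inter_union_diff U B).symm
  have hdisj : Disjoint (U ∩ B) (U \ B) :=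
    Set.disjoint_of_subset_left Set.inter_subset_right disjoint_sdiff_self_right
  have hsplit_outer : ∀ g : Euc d → ℝ≥0∞,
      ∫⁻ x in U, g x = (∫⁻ x in U ∩ B, g x) + ∫⁻ x in U \ B, g x := by
    intro g
    conv_lhs => rw [hUsplit]
    exact lintegral_union hUdB hdisj
  -- Lp part
  have hLp : lpIntP d p U v = lpIntP d p (U ∩ B) u := by
    rw [lpIntP, lpIntP, hsplit_outer]
    have h1 : ∫⁻ x in U ∩ B, (‖v x‖₊ : ℝ≥0∞) ^ p = ∫⁻ x in U ∩ B, (‖u x‖₊ : ℝ≥0∞) ^ p :=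
      setLIntegral_congr_fun hUB (fun x hx => by
        rw [hv, Set.indicator_of_mem hx.2])
    have h2 : ∫⁻ x in U \ B, (‖v x‖₊ : ℝ≥0∞) ^ p = 0 := by
      rw [setLIntegral_congr_fun hUdB (fun x hx => ?_), lintegral_zero]
      rw [hv, Set.indicator_of_notMem hx.2]
      simp [ENNReal.zero_rpow_of_pos hp0]
    rw [h1, h2, add_zero]
  -- the Gagliardo integrand for `v`
  set F : Euc d → Euc d → ℝ≥0∞ :=
    fun x y => (‖v x - v y‖₊ : ℝ≥0∞) ^ p / (‖x - y‖₊ : ℝ≥0∞) ^ r with hF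
  have hFmeas : Measurable (Function.uncurry F) := by
    apply Measurable.div
    · apply Measurable.pow_const
      exact ((hv'.comp measurable_fst).sub (hv'.comp measurable_snd)).enorm
    · apply Measurable.pow_const
      exact (measurable_fst.sub measurable_snd).enorm
  -- pointwise estimate for the cross term
  have hcross : ∀ x ∈ U ∩ B, (∫⁻ y in U \ B, F x y) ≤ (‖u x‖₊ : ℝ≥0∞) ^ p * κ := by
    intro x hx
    have hFx : ∫⁻ y in U \ B, F x y
        = ∫⁻ y in U \ B, (‖u x‖₊ : ℝ≥0∞) ^ p * ((‖x - y‖₊ : ℝ≥0∞) ^ r)⁻¹ := by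
      refine setLIntegral_congr_fun hUdB (fun y hy => ?_)
      rw [hF]
      simp only
      rw [hv, Set.indicator_of_mem hx.2, Set.indicator_of_notMem hy.2, sub_zero,
        div_eq_mul_inv]
    rw [hFx]
    rcases Classical.em (u x = 0) with hx0 | hx0
    · simp [hx0, ENNReal.zero_rpow_of_pos hp0]
    · have hxcl : x ∈ closure (U ∩ innerSet d δ B) := by
        by_contra hxcl
        exact hx0 (hsupp x ⟨hx, hxcl⟩)
      have hsub : U \ B ⊆ {y : Euc d | δ ≤ dist x y} := fun y hy =>
        aux_dist_ge hB hxcl hy.2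
      calc ∫⁻ y in U \ B, (‖u x‖₊ : ℝ≥0∞) ^ p * ((‖x - y‖₊ : ℝ≥0∞) ^ r)⁻¹
          ≤ ∫⁻ y in {y : Euc d | δ ≤ dist x y},
              (‖u x‖₊ : ℝ≥0∞) ^ p * ((‖x - y‖₊ : ℝ≥0∞) ^ r)⁻¹ :=
            lintegral_mono_set hsub
        _ = (‖u x‖₊ : ℝ≥0∞) ^ p * ∫⁻ y in {y : Euc d | δ ≤ dist x y},
              ((‖x - y‖₊ : ℝ≥0∞) ^ r)⁻¹ :=
            lintegral_const_mul' _ _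
              (ENNReal.rpow_ne_top_of_nonneg hp0.le ENNReal.coe_ne_top)
        _ = (‖u x‖₊ : ℝ≥0∞) ^ p * κ := by rw [aux_translate d r δ x]
  -- term (1,1)
  have hT11 : ∫⁻ x in U ∩ B, ∫⁻ y in U ∩ B, F x y = wSemiP d s p (U ∩ B) u := by
    rw [wSemiP]
    refine setLIntegral_congr_fun hUB (fun x hx => ?_)
    refine setLIntegral_congr_fun hUB (fun y hy => ?_)
    rw [hF]
    simp only
    rw [hv, Set.indicator_of_mem hx.2, Set.indicator_of_mem hy.2]
  -- term (2,2)
  have hT22 : ∫⁻ x in U \ B, ∫⁻ y in U \ B, F x y = 0 := by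
    rw [setLIntegral_congr_fun hUdB (fun x hx => ?_), lintegral_zero]
    rw [setLIntegral_congr_fun hUdB (fun y hy => ?_), lintegral_zero]
    rw [hF]
    simp only
    rw [hv, Set.indicator_of_notMem hx.2, Set.indicator_of_notMem hy.2]
    simp [ENNReal.zero_rpow_of_pos hp0, ENNReal.zero_div]
  -- term (1,2)
  have hT12 : ∫⁻ x in U ∩ B, ∫⁻ y in U \ B, F x y ≤ κ * lpIntP d p (U ∩ B) u := by
    calc ∫⁻ x in U ∩ B, ∫⁻ y in U \ B, F x y
        ≤ ∫⁻ x in U ∩ B, (‖u x‖₊ : ℝ≥0∞) ^ p * κ := setLIntegral_mono' hUB hcross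
      _ = (∫⁻ x in U ∩ B, (‖u x‖₊ : ℝ≥0∞) ^ p) * κ := lintegral_mul_const' _ _ hκtop
      _ = κ * lpIntP d p (U ∩ B) u := by rw [lpIntP, mul_comm]
  -- term (2,1): swap and reduce to the same estimate
  have hT21 : ∫⁻ x in U \ B, ∫⁻ y in U ∩ B, F x y ≤ κ * lpIntP d p (U ∩ B) u := by
    have hswap : ∫⁻ x in U \ B, ∫⁻ y in U ∩ B, F x y
        = ∫⁻ y in U ∩ B, ∫⁻ x in U \ B, F x y :=
      lintegral_lintegral_swap hFmeas.aemeasurable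
    have hsym : ∀ y ∈ U ∩ B, ∫⁻ x in U \ B, F x y ≤ (‖u y‖₊ : ℝ≥0∞) ^ p * κ := by
      intro y hy
      have h1 : ∫⁻ x in U \ B, F x y = ∫⁻ x in U \ B, F y x := by
        refine setLIntegral_congr_fun hUdB (fun x hx => ?_)
        rw [hF]
        simp only
        rw [← neg_sub (v y) (v x), ← neg_sub y x, nnnorm_neg, nnnorm_neg]
      rw [h1]
      exact hcross y hy
    rw [hswap]
    calc ∫⁻ y in U ∩ B, ∫⁻ x in U \ B, F x y
        ≤ ∫⁻ y in U ∩ B, (‖u y‖₊ : ℝ≥0∞) ^ p * κ := setLIntegral_mono' hUB hsym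
      _ = (∫⁻ y in U ∩ B, (‖u y‖₊ : ℝ≥0∞) ^ p) * κ := lintegral_mul_const' _ _ hκtop
      _ = κ * lpIntP d p (U ∩ B) u := by rw [lpIntP, mul_comm]
  -- assemble the seminorm bound
  have hinner_meas1 : Measurable fun x => ∫⁻ y in U ∩ B, F x y :=
    hFmeas.lintegral_prod_right
  have hinner_meas2 : Measurable fun x => ∫⁻ y in U \ B, F x y :=
    hFmeas.lintegral_prod_right
  have hSemi : wSemiP d s p U v
      ≤ wSemiP d s p (U ∩ B) u + (κ * lpIntP d p (U ∩ B) u + κ * lpIntP d p (U ∩ B) u) := by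
    have hW : wSemiP d s p U v
        = ((∫⁻ x in U ∩ B, ∫⁻ y in U ∩ B, F x y) + ∫⁻ x in U ∩ B, ∫⁻ y in U \ B, F x y)
          + ((∫⁻ x in U \ B, ∫⁻ y in U ∩ B, F x y) + ∫⁻ x in U \ B, ∫⁻ y in U \ B, F x y) := by
      rw [wSemiP, hsplit_outer]
      have hin : ∀ x : Euc d, ∫⁻ y in U, F x y
          = (∫⁻ y in U ∩ B, F x y) + ∫⁻ y in U \ B, F x y := fun x => hsplit_outer _
      change (∫⁻ x in U ∩ B, ∫⁻ y in U, F x y) + ∫⁻ x in U \ B, ∫⁻ y in U, F x y = _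
      simp_rw [hin]
      rw [lintegral_add_left hinner_meas1, lintegral_add_left hinner_meas1]
    rw [hW, hT11, hT22, add_zero]
    exact add_le_add (add_le_add_right hT12 _) hT21 |>.trans (by rw [add_assoc])
  -- final computation
  rw [wNorm, wNorm, hLp]
  set L := lpIntP d p (U ∩ B) u
  set S := wSemiP d s p (U ∩ B) u
  have hfinal : L + wSemiP d s p U v ≤ (1 + 2 * κ) * (L + S) := by
    calc L + wSemiP d s p U v ≤ L + (S + (κ * L + κ * L)) := add_le_add_right hSemi L
      _ = (L + S) + 2 * κ * L := by ring
      _ ≤ (L + S) + 2 * κ * (L + S) := by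
          exact add_le_add_right (mul_le_mul_right le_self_add _) _
      _ = (1 + 2 * κ) * (L + S) := by ring
  calc (L + wSemiP d s p U v) ^ (1/p)
      ≤ ((1 + 2 * κ) * (L + S)) ^ (1/p) := ENNReal.rpow_le_rpow hfinal (by positivity)
    _ = M * (L + S) ^ (1/p) := by
        rw [ENNReal.mul_rpow_of_nonneg _ _ (by positivity : (0:ℝ) ≤ 1/p), hM]
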